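/- Moreover, √N·|F^N(y) − f(y)| ≤ 2λ K (max_i g_i / min_i g_i) · √N·|N*/N − γ| for every y in the probability simplex; hence if √N(N*/N − γ) → 0 then √N·sup_{y∈Δ}|F^N(y) − f(y)| → 0. -/

import Mathlib

open Finset

/-- Diffusion-scaled drift error bound: `√N |F^N(y) − f(y)| ≤ 2 λ K (max g/min g) √N |N*/N − γ|`
on the simplex; hence `√N(N*/N − γ) → 0` implies `√N sup_{y∈Δ} |F^N(y) − f(y)| → 0`. -/
theorem prelimit_drift_close_sqrt (K : ℕ) (hK : 0 < K) (lam gam mu : ℝ)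
    (hlam : 0 < lam) (hgam : 0 < gam) (hmu : 0 < mu)
    (KU : ℕ) (hKU : KU < K) (g : Fin K → ℝ) (hg : ∀ i, 0 < g i)
    (p : Fin K → Fin K → ℝ) (hp0 : ∀ k j, 0 ≤ p k j) (hp1 : ∀ k j, p k j ≤ 1)
    (Nn Nstar : ℕ → ℕ) (hNn : ∀ n, 0 < Nn n) :
    let F : ℝ → EuclideanSpace ℝ (Fin K) → EuclideanSpace ℝ (Fin K) := fun c y =>
      WithLp.toLp 2 (fun j : Fin K =>
        (∑ k : Fin K, if max KU (j : ℕ) ≤ (k : ℕ) then mu * p k j * y k else 0)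
          + (if (j : ℕ) = K - 1 then lam * c else 0)
          - (if KU ≤ (j : ℕ) then mu * y j else 0)
          - lam * c * y j * g j / (∑ i, y i * g i))
    let Δ : Set (EuclideanSpace ℝ (Fin K)) :=
      {y | (∀ i, 0 ≤ y i ∧ y i ≤ 1) ∧ (∑ i, y i) = 1}
    (∀ n, ∀ y ∈ Δ,
        Real.sqrt (Nn n) * ‖F ((Nstar n : ℝ) / (Nn n)) y - F gam y‖ ≤
          2 * lam * K * ((⨆ i, g i) / (⨅ i, g i)) *
            (Real.sqrt (Nn n) * |(Nstar n : ℝ) / (Nn n) - gam|)) ∧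
    (Filter.Tendsto (fun n => Real.sqrt (Nn n) * ((Nstar n : ℝ) / (Nn n) - gam))
        Filter.atTop (nhds 0) →
      Filter.Tendsto
        (fun n => Real.sqrt (Nn n) * ⨆ y ∈ Δ, ‖F ((Nstar n : ℝ) / (Nn n)) y - F gam y‖)
        Filter.atTop (nhds 0)) := by
  intro F Δ
  haveI : Nonempty (Fin K) := ⟨⟨0, hK⟩⟩
  obtain ⟨i₀, hi₀⟩ := Finite.exists_min g
  have hbdd : BddAbove (Set.range g) := (Set.finite_range g).bddAbove
  have hbddb : BddBelow (Set.range g) := (Set.finite_range g).bddBelow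
  have hInf_eq : (⨅ i, g i) = g i₀ := le_antisymm (ciInf_le hbddb i₀) (le_ciInf hi₀)
  have hInf_pos : 0 < ⨅ i, g i := hInf_eq ▸ hg i₀
  have hle_sup : ∀ i, g i ≤ ⨆ i, g i := fun i => le_ciSup hbdd i
  set R : ℝ := (⨆ i, g i) / (⨅ i, g i) with hR
  have hratio1 : 1 ≤ R := (one_le_div hInf_pos).2 (hInf_eq ▸ hle_sup i₀)
  have hRpos : 0 < R := lt_of_lt_of_le one_pos hratio1
  have key : ∀ c : ℝ, ∀ y ∈ Δ, ‖F c y - F gam y‖ ≤ 2 * lam * K * R * |c - gam| := by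
    intro c y hy
    obtain ⟨hy01, hysum⟩ := hy
    have hS : (⨅ i, g i) ≤ ∑ i, y i * g i := by
      calc (⨅ i, g i) = ∑ i, y i * (⨅ i, g i) := by
            rw [← Finset.sum_mul, hysum, one_mul]
        _ ≤ ∑ i, y i * g i := Finset.sum_le_sum fun i _ =>
            mul_le_mul_of_nonneg_left (ciInf_le hbddb i) (hy01 i).1
    have hSpos : 0 < ∑ i, y i * g i := lt_of_lt_of_le hInf_pos hS
    set b : ℝ := 2 * lam * R * |c - gam| with hb
    have hbnonneg : 0 ≤ b :=
      mul_nonneg (mul_nonneg (by positivity) hRpos.le) (abs_nonneg _)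
    have hcomp : ∀ j : Fin K, |(F c y - F gam y) j| ≤ b := by
      intro j
      have hval : (F c y - F gam y) j =
          (if (j : ℕ) = K - 1 then lam * (c - gam) else 0)
            - lam * (c - gam) * y j * g j / (∑ i, y i * g i) := by
        show F c y j - F gam y j = _
        simp only [F, WithLp.ofLp_toLp]
        by_cases hj : (j : ℕ) = K - 1 <;> simp only [hj, if_true, if_false, if_pos, if_neg,
          reduceIte] <;> ring
      have hfrac : y j * g j / (∑ i, y i * g i) ≤ R := by
        apply div_le_div₀ ((hInf_pos.trans_le (hInf_eq ▸ hi₀ j)).le.trans (hle_sup j))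
        · calc y j * g j ≤ 1 * g j := mul_le_mul_of_nonneg_right (hy01 j).2 (hg j).le
            _ = g j := one_mul _
            _ ≤ ⨆ i, g i := hle_sup j
        · exact hInf_pos
        · exact hS
      have hfrac0 : 0 ≤ y j * g j / (∑ i, y i * g i) :=
        div_nonneg (mul_nonneg (hy01 j).1 (hg j).le) hSpos.le
      rw [hval]
      have h1 : |if (j : ℕ) = K - 1 then lam * (c - gam) else 0| ≤ lam * |c - gam| := by
        split
        · rw [abs_mul, abs_of_pos hlam]
        · simp [abs_nonneg, mul_nonneg hlam.le (abs_nonneg (c - gam))]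
      have h2 : |lam * (c - gam) * y j * g j / (∑ i, y i * g i)| ≤ lam * |c - gam| * R := by
        have : lam * (c - gam) * y j * g j / (∑ i, y i * g i)
            = (lam * (c - gam)) * (y j * g j / (∑ i, y i * g i)) := by ring
        rw [this, abs_mul, abs_of_nonneg hfrac0, abs_mul, abs_of_pos hlam, mul_assoc, mul_assoc]
        exact mul_le_mul_of_nonneg_left
          (mul_le_mul_of_nonneg_left hfrac (abs_nonneg _))
          hlam.le
      calc |_ - _| ≤ |if (j : ℕ) = K - 1 then lam * (c - gam) else 0|
            + |lam * (c - gam) * y j * g j / (∑ i, y i * g i)| := abs_sub _ _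
        _ ≤ lam * |c - gam| + lam * |c - gam| * R := add_le_add h1 h2
        _ ≤ b := by rw [hb]; nlinarith [abs_nonneg (c - gam)]
    have hnorm : ‖F c y - F gam y‖ ≤ Real.sqrt K * b := by
      rw [EuclideanSpace.norm_eq]
      have hsum : ∑ j, ‖(F c y - F gam y) j‖ ^ 2 ≤ ∑ _j : Fin K, b ^ 2 :=
        Finset.sum_le_sum fun j _ => by
          rw [Real.norm_eq_abs]
          have := hcomp j
          nlinarith [abs_nonneg ((F c y - F gam y) j)]
      calc Real.sqrt (∑ j, ‖(F c y - F gam y) j‖ ^ 2)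
          ≤ Real.sqrt ((K : ℝ) * b ^ 2) := Real.sqrt_le_sqrt (by
            simpa [Finset.sum_const, nsmul_eq_mul] using hsum)
        _ = Real.sqrt K * b := by
            rw [Real.sqrt_mul (Nat.cast_nonneg K), Real.sqrt_sq hbnonneg]
    have hsqK : Real.sqrt K ≤ (K : ℝ) := by
      have h1 : (1 : ℝ) ≤ (K : ℝ) := by exact_mod_cast hK
      have : Real.sqrt K ≤ Real.sqrt ((K : ℝ) ^ 2) := Real.sqrt_le_sqrt (by nlinarith)
      rwa [Real.sqrt_sq (by positivity)] at this
    calc ‖F c y - F gam y‖ ≤ Real.sqrt K * b := hnorm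
      _ ≤ (K : ℝ) * b := mul_le_mul_of_nonneg_right hsqK hbnonneg
      _ = 2 * lam * K * R * |c - gam| := by rw [hb]; ring
  constructor
  · intro n y hy
    calc Real.sqrt (Nn n) * ‖F ((Nstar n : ℝ) / (Nn n)) y - F gam y‖
        ≤ Real.sqrt (Nn n) * (2 * lam * K * R * |(Nstar n : ℝ) / (Nn n) - gam|) :=
          mul_le_mul_of_nonneg_left (key _ y hy) (Real.sqrt_nonneg _)
      _ = 2 * lam * K * R * (Real.sqrt (Nn n) * |(Nstar n : ℝ) / (Nn n) - gam|) := by ring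
  · intro htend
    have habs : Filter.Tendsto
        (fun n => 2 * lam * K * R *
          |Real.sqrt (Nn n) * ((Nstar n : ℝ) / (Nn n) - gam)|) Filter.atTop (nhds 0) := by
      have h1 := htend.abs
      simpa using h1.const_mul (2 * lam * K * R)
    apply squeeze_zero _ _ habs
    · intro n
      exact mul_nonneg (Real.sqrt_nonneg _)
        (Real.iSup_nonneg fun y => Real.iSup_nonneg fun _ => norm_nonneg _)
    · intro n
      have hsup : (⨆ y ∈ Δ, ‖F ((Nstar n : ℝ) / (Nn n)) y - F gam y‖)
          ≤ 2 * lam * K * R * |(Nstar n : ℝ) / (Nn n) - gam| := by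
        apply Real.iSup_le _ (by positivity)
        intro y
        exact Real.iSup_le (fun hy => key _ y hy) (by positivity)
      calc Real.sqrt (Nn n) * ⨆ y ∈ Δ, ‖F ((Nstar n : ℝ) / (Nn n)) y - F gam y‖
          ≤ Real.sqrt (Nn n) * (2 * lam * K * R * |(Nstar n : ℝ) / (Nn n) - gam|) :=
            mul_le_mul_of_nonneg_left hsup (Real.sqrt_nonneg _)
        _ = 2 * lam * K * R * |Real.sqrt (Nn n) * ((Nstar n : ℝ) / (Nn n) - gam)| := by
            rw [abs_mul, abs_of_nonneg (Real.sqrt_nonneg _)]; ring
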